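/- Let (X,d) be an unbounded metric space, p∈X, and let n≥2 be an integer. Then the following are equivalent: (1) the inequality |C| ≤ n holds for every clique C of the cluster graph G_{X,r̃}, for every scaling sequence r̃; (2) F_n(x_1,…,x_n) tends to 0 as max_{1≤k≤n} d(x_k,p) tends to ∞, where F_n(x_1,…,x_n) := (min_{1≤k≤n} d(x_k,p) · Π_{1≤k<l≤n} d(x_k,x_l)) / (max_{1≤k≤n} d(x_k,p))^{n(n−1)/2+1} for (x_1,…,x_n)≠(p,…,p) and F_n(p,…,p):=0. -/

import Mathlib

open Filter Topology
open scoped Classical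

/-- An unbounded metric space. -/
def UnboundedSpace (X : Type*) [MetricSpace X] : Prop :=
  ¬ Bornology.IsBounded (Set.univ : Set X)

/-- A scaling sequence: positive reals tending to infinity. -/
def ScalingSeq (r : ℕ → ℝ) : Prop :=
  (∀ n, 0 < r n) ∧ Filter.Tendsto r Filter.atTop Filter.atTop

/-- Two sequences are mutually stable w.r.t. `r` if `d(x_n, y_n)/r_n` has a finite limit. -/
def MutuallyStable {X : Type*} [MetricSpace X] (r : ℕ → ℝ) (x y : ℕ → X) : Prop :=
  ∃ L : ℝ, Filter.Tendsto (fun n => dist (x n) (y n) / r n) Filter.atTop (nhds L)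

/-- `Seq(X, r̃)`: sequences going to infinity such that `d(x_n, p)/r_n` has a finite limit. -/
def SeqInf {X : Type*} [MetricSpace X] (r : ℕ → ℝ) (p : X) : Set (ℕ → X) :=
  {x | Filter.Tendsto (fun n => dist (x n) p) Filter.atTop Filter.atTop ∧
    ∃ L : ℝ, Filter.Tendsto (fun n => dist (x n) p / r n) Filter.atTop (nhds L)}

/-- The relation `x̃ ≡ ỹ`, i.e. `d(x_n, y_n)/r_n → 0`. -/
def EquivSeq {X : Type*} [MetricSpace X] (r : ℕ → ℝ) (x y : ℕ → X) : Prop :=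
  Filter.Tendsto (fun n => dist (x n) (y n) / r n) Filter.atTop (nhds 0)

/-- The `≡`-equivalence class of `x` inside `Seq(X, r̃)`. -/
def classOf {X : Type*} [MetricSpace X] (r : ℕ → ℝ) (p : X) (x : ℕ → X) : Set (ℕ → X) :=
  {y | y ∈ SeqInf r p ∧ EquivSeq r x y}

/-- The vertex set of the cluster graph `G_{X, r̃}`: all `≡`-classes of `Seq(X, r̃)`. -/
def VertexSet {X : Type*} [MetricSpace X] (r : ℕ → ℝ) (p : X) : Set (Set (ℕ → X)) :=
  {v | ∃ x ∈ SeqInf r p, v = classOf r p x}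

/-- Adjacency in the cluster graph `G_{X, r̃}`: distinct classes whose representatives
are mutually stable. -/
def AdjacentCl {X : Type*} [MetricSpace X] (r : ℕ → ℝ) (p : X) (u v : Set (ℕ → X)) : Prop :=
  u ∈ VertexSet r p ∧ v ∈ VertexSet r p ∧ u ≠ v ∧
    ∀ x ∈ u, ∀ y ∈ v, MutuallyStable r x y

/-- The weight `ρ_X` on the cluster graph: for an edge `{u,v}` it is the (unique) limit
`lim d(x_n, y_n)/r_n` for representatives. -/
noncomputable def rhoX {X : Type*} [MetricSpace X] (r : ℕ → ℝ) (u v : Set (ℕ → X)) : ℝ :=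
  sSup {L : ℝ | ∃ x ∈ u, ∃ y ∈ v,
    Filter.Tendsto (fun n => dist (x n) (y n) / r n) Filter.atTop (nhds L)}

/-- The root `ν₀ = X̃⁰_{∞,r̃}`: sequences with `d(z_n,p) → ∞` and `d(z_n,p)/r_n → 0`. -/
def rootClass {X : Type*} [MetricSpace X] (r : ℕ → ℝ) (p : X) : Set (ℕ → X) :=
  {z | Filter.Tendsto (fun n => dist (z n) p) Filter.atTop Filter.atTop ∧
    Filter.Tendsto (fun n => dist (z n) p / r n) Filter.atTop (nhds 0)}

/-- The labeling `ρ⁰` of vertices: `ρ⁰(v) = lim d(x_n,p)/r_n` for `x̃ ∈ v`. -/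
noncomputable def rho0 {X : Type*} [MetricSpace X] (r : ℕ → ℝ) (p : X)
    (v : Set (ℕ → X)) : ℝ :=
  sSup {L : ℝ | ∃ x ∈ v, Filter.Tendsto (fun n => dist (x n) p / r n) Filter.atTop (nhds L)}

/-- A self-stable family: a subset of `Seq(X, r̃)` any two of whose members are
mutually stable. -/
def SelfStable {X : Type*} [MetricSpace X] (r : ℕ → ℝ) (p : X) (F : Set (ℕ → X)) : Prop :=
  F ⊆ SeqInf r p ∧ ∀ x ∈ F, ∀ y ∈ F, MutuallyStable r x y

/-- A maximal self-stable set `X̃_{∞, r̃}`. -/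
def MaxSelfStable {X : Type*} [MetricSpace X] (r : ℕ → ℝ) (p : X) (F : Set (ℕ → X)) : Prop :=
  SelfStable r p F ∧ ∀ F', SelfStable r p F' → F ⊆ F' → F = F'

/-- The pretangent space `Ω^X_{∞,r̃}` attached to a maximal self-stable set `F`:
the set of `≡`-classes of members of `F`. -/
def PretangentCl {X : Type*} [MetricSpace X] (r : ℕ → ℝ) (F : Set (ℕ → X)) :
    Set (Set (ℕ → X)) :=
  {v | ∃ x ∈ F, v = {y | y ∈ F ∧ EquivSeq r x y}}

/-- A clique in the cluster graph `G_{X, r̃}`. -/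
def IsCliqueCl {X : Type*} [MetricSpace X] (r : ℕ → ℝ) (p : X)
    (C : Set (Set (ℕ → X))) : Prop :=
  C ⊆ VertexSet r p ∧ ∀ u ∈ C, ∀ v ∈ C, u ≠ v → AdjacentCl r p u v

/-- The function `F_n` of Theorem t2.2.1. -/
noncomputable def FnFun {X : Type*} [MetricSpace X] (p : X) (n : ℕ) (x : Fin n → X) : ℝ :=
  if ∀ k, x k = p then 0
  else (⨅ k, dist (x k) p) *
      (∏ k : Fin n, ∏ l : Fin n, if k < l then dist (x k) (x l) else 1) /
      (⨆ k, dist (x k) p) ^ (n * (n - 1) / 2 + 1)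

/-- The condition that `F_n(x_1, …, x_n) → 0` as `max_k d(x_k, p) → ∞`. -/
def CondF {X : Type*} [MetricSpace X] (p : X) (n : ℕ) : Prop :=
  ∀ ε : ℝ, 0 < ε → ∃ M : ℝ, ∀ x : Fin n → X,
    M ≤ (⨆ k, dist (x k) p) → |FnFun p n x| < ε

/-- The annulus `A(p, R, k) = {x : R/k ≤ d(x,p) ≤ R·k}`; `A(p, R, 1)` is the sphere
`S(p, R)`. -/
def annulus {X : Type*} [MetricSpace X] (p : X) (R k : ℝ) : Set X :=
  {x | R / k ≤ dist x p ∧ dist x p ≤ R * k}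

/-- `Ψ(k) = limsup_{R → ∞} diam(A(p, R, k)) / R` (with `diam ∅ = 0`). -/
noncomputable def Psi {X : Type*} [MetricSpace X] (p : X) (k : ℝ) : ℝ :=
  Filter.limsup (fun R : ℝ => Metric.diam (annulus p R k) / R) Filter.atTop

/-- The condition `lim_{k→1⁺} limsup_{R→∞} diam(A(p,R,k))/R
= limsup_{R→∞} diam(S(p,R))/R = 0`. -/
def CondA {X : Type*} [MetricSpace X] (p : X) : Prop :=
  Filter.Tendsto (fun k => Psi p k) (nhdsWithin 1 (Set.Ioi 1)) (nhds 0) ∧ Psi p 1 = 0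


/-! ### Auxiliary lemmas -/

section Aux

open Finset

/-- The set of strictly increasing pairs in `Fin n × Fin n`. -/
def pairsS (n : ℕ) : Finset (Fin n × Fin n) := Finset.univ.filter (fun q => q.1 < q.2)

lemma prod_pairs_eq {n : ℕ} {M : Type*} [CommMonoid M] (f : Fin n → Fin n → M) :
    (∏ k : Fin n, ∏ l : Fin n, if k < l then f k l else 1) =
      ∏ q ∈ pairsS n, f q.1 q.2 := by
  rw [pairsS, Finset.prod_filter, ← Finset.univ_product_univ,
    Finset.prod_product (f := fun q : Fin n × Fin n => if q.1 < q.2 then f q.1 q.2 else 1)]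

lemma card_pairsS {n : ℕ} : (pairsS n).card = n * (n - 1) / 2 := by
  have h1 : (pairsS n).card = ∑ k : Fin n, (n - 1 - (k : ℕ)) := by
    rw [pairsS, Finset.card_filter, ← Finset.univ_product_univ,
      Finset.sum_product (f := fun q : Fin n × Fin n => if q.1 < q.2 then 1 else 0)]
    congr 1; funext k
    rw [← Finset.card_filter]
    have : Finset.univ.filter (fun l => k < l) = Finset.Ioi k := by ext l; simp
    rw [this, Fin.card_Ioi]
  rw [h1, Fin.sum_univ_eq_sum_range, Finset.sum_range_reflect (fun j => j) n,
    Finset.sum_range_id]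

lemma pairsS_nonempty {n : ℕ} (hn : 2 ≤ n) : (pairsS n).Nonempty := by
  refine ⟨(⟨0, by omega⟩, ⟨1, by omega⟩), Finset.mem_filter.2 ⟨Finset.mem_univ _, ?_⟩⟩
  exact Fin.mk_lt_mk.2 one_pos

/-- squeeze: if `|f - g| ≤ e` with `e → 0` and `g → L` then `f → L`. -/
lemma tendsto_of_abs_sub_le {f g e : ℕ → ℝ} {L : ℝ}
    (h : ∀ m, |f m - g m| ≤ e m) (he : Filter.Tendsto e Filter.atTop (nhds 0))
    (hg : Filter.Tendsto g Filter.atTop (nhds L)) :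
    Filter.Tendsto f Filter.atTop (nhds L) := by
  have h0 : Filter.Tendsto (fun m => f m - g m) Filter.atTop (nhds 0) :=
    squeeze_zero_norm h he
  simpa using h0.add hg

/-- Congruence for limits of scaled distances under the equivalence. -/
lemma tendsto_dist_div_congr {X : Type*} [MetricSpace X] {r : ℕ → ℝ} (hr : ∀ m, 0 < r m)
    {x x' y y' : ℕ → X} {L : ℝ}
    (hx : Filter.Tendsto (fun m => dist (x m) (x' m) / r m) Filter.atTop (nhds 0))
    (hy : Filter.Tendsto (fun m => dist (y m) (y' m) / r m) Filter.atTop (nhds 0))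
    (h : Filter.Tendsto (fun m => dist (x m) (y m) / r m) Filter.atTop (nhds L)) :
    Filter.Tendsto (fun m => dist (x' m) (y' m) / r m) Filter.atTop (nhds L) := by
  apply tendsto_of_abs_sub_le (g := fun m => dist (x m) (y m) / r m)
    (e := fun m => dist (x m) (x' m) / r m + dist (y m) (y' m) / r m)
  · intro m
    rw [div_sub_div_same, abs_div, abs_of_pos (hr m), ← add_div]
    gcongr
    · exact le_of_lt (hr m)
    have key : ∀ a b c d : X, dist a b - dist c d ≤ dist a c + dist b d := by
      intro a b c d
      have h1 := dist_triangle4 a c d b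
      have h3 : dist d b = dist b d := dist_comm _ _
      linarith
    rw [abs_sub_le_iff]
    constructor
    · have := key (x' m) (y' m) (x m) (y m)
      rw [dist_comm (x' m) (x m), dist_comm (y' m) (y m)] at this
      linarith
    · exact key (x m) (y m) (x' m) (y' m)
  · simpa using hx.add hy
  · exact h

section EquivCl

variable {X : Type*} [MetricSpace X] {r : ℕ → ℝ} {p : X}

lemma equivSeq_refl (x : ℕ → X) : EquivSeq r x x := by
  simp only [EquivSeq, dist_self, zero_div]
  exact tendsto_const_nhds

lemma equivSeq_symm {x y : ℕ → X} (h : EquivSeq r x y) : EquivSeq r y x := by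
  simpa [EquivSeq, dist_comm] using h

lemma equivSeq_trans (hr : ∀ m, 0 < r m) {x y z : ℕ → X}
    (h1 : EquivSeq r x y) (h2 : EquivSeq r y z) : EquivSeq r x z := by
  refine squeeze_zero (g := fun m => dist (x m) (y m) / r m + dist (y m) (z m) / r m)
    (fun m => div_nonneg dist_nonneg (hr m).le) (fun m => ?_) (by simpa using h1.add h2)
  show dist (x m) (z m) / r m ≤ dist (x m) (y m) / r m + dist (y m) (z m) / r m
  rw [← add_div]
  gcongr
  · exact (hr m).le
  · exact dist_triangle _ _ _

lemma mem_classOf_self {x : ℕ → X} (hx : x ∈ SeqInf r p) : x ∈ classOf r p x :=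
  ⟨hx, equivSeq_refl x⟩

lemma classOf_eq_of_equivSeq (hr : ∀ m, 0 < r m) {x y : ℕ → X}
    (h : EquivSeq r x y) : classOf r p x = classOf r p y := by
  ext z
  simp only [classOf, Set.mem_setOf_eq]
  exact ⟨fun ⟨hz, he⟩ => ⟨hz, equivSeq_trans hr (equivSeq_symm h) he⟩,
    fun ⟨hz, he⟩ => ⟨hz, equivSeq_trans hr h he⟩⟩

lemma equivSeq_of_classOf_eq {x y : ℕ → X} (hy : y ∈ SeqInf r p)
    (h : classOf r p x = classOf r p y) : EquivSeq r x y := by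
  have : y ∈ classOf r p x := h ▸ mem_classOf_self hy
  exact this.2

end EquivCl

/-- Bolzano–Weierstrass for a finite family of uniformly bounded real sequences. -/
lemma exists_subseq_forall_tendsto {ι : Type} [Fintype ι] [Nonempty ι]
    (g : ι → ℕ → ℝ) (c : ℝ) (hc : ∀ i m, |g i m| ≤ c) :
    ∃ φ : ℕ → ℕ, StrictMono φ ∧ ∃ a : ι → ℝ,
      ∀ i, Filter.Tendsto (fun m => g i (φ m)) Filter.atTop (nhds (a i)) := by
  have hc0 : 0 ≤ c := le_trans (abs_nonneg _) (hc (Classical.arbitrary ι) 0)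
  have hmem : ∀ m, (fun i => g i m) ∈ Metric.closedBall (0 : ι → ℝ) c := by
    intro m
    rw [Metric.mem_closedBall, dist_pi_le_iff hc0]
    intro i
    simpa [Real.dist_eq] using hc i m
  obtain ⟨a, -, φ, hφ, ha⟩ := tendsto_subseq_of_bounded
    (Metric.isBounded_closedBall (x := (0 : ι → ℝ)) (r := c)) hmem
  exact ⟨φ, hφ, a, fun i => (tendsto_pi_nhds.1 ha) i⟩

end Aux

set_option maxHeartbeats 1000000 in
/-- Lemma l2.3.5n. Every clique of every cluster `G_{X,r̃}` has at
most `n` elements iff `F_n(x_1,…,x_n) → 0` as `max_k d(x_k,p) → ∞`. -/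
theorem clique_card_le_iff {X : Type*} [MetricSpace X]
    (hX : UnboundedSpace X) (p : X) (n : ℕ) (hn : 2 ≤ n) :
    (∀ r : ℕ → ℝ, ScalingSeq r → ∀ C : Set (Set (ℕ → X)),
        IsCliqueCl r p C → Cardinal.mk ↥C ≤ (n : Cardinal)) ↔
      CondF p n := by
  have hn0 : 0 < n := by omega
  haveI : Nonempty (Fin n) := ⟨⟨0, hn0⟩⟩
  constructor
  · -- every clique ≤ n → CondF, by contraposition
    intro H
    by_contra hF
    rw [CondF] at hF
    push_neg at hF
    obtain ⟨ε, hε, hM⟩ := hF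
    -- unboundedness gives far away points
    have hw : ∀ j : ℕ, ∃ w : X, (j : ℝ) < dist w p := by
      intro j
      by_contra h
      push_neg at h
      exact hX ((Metric.isBounded_iff_subset_closedBall p).2
        ⟨j, fun y _ => Metric.mem_closedBall.2 (h y)⟩)
    choose w hw using hw
    -- choose the bad tuples
    have hz : ∀ j : ℕ, ∃ zz : Fin n → X,
        max ((j:ℝ)+1) (((j:ℝ)+1) * dist (w j) p) ≤ (⨆ k, dist (zz k) p)
          ∧ ε ≤ |FnFun p n zz| := fun j => hM _
    choose z hzR hzF using hz
    set R : ℕ → ℝ := fun j => ⨆ k, dist (z j k) p with hR_def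
    have hRj : ∀ j : ℕ, (j:ℝ)+1 ≤ R j := fun j => le_trans (le_max_left _ _) (hzR j)
    have hR0 : ∀ j, 0 < R j := fun j => lt_of_lt_of_le (by positivity) (hRj j)
    have hRw : ∀ j : ℕ, ((j:ℝ)+1) * dist (w j) p ≤ R j :=
      fun j => le_trans (le_max_right _ _) (hzR j)
    have hguard : ∀ j, ¬ (∀ k, z j k = p) := by
      intro j h
      have h0 : FnFun p n (z j) = 0 := by rw [FnFun, if_pos h]
      have := hzF j
      rw [h0, abs_zero] at this
      exact absurd this (not_le.2 hε)
    have hFn_eq : ∀ j, FnFun p n (z j) =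
        ((⨅ k, dist (z j k) p) * ∏ q ∈ pairsS n, dist (z j q.1) (z j q.2)) /
          R j ^ (n*(n-1)/2 + 1) := by
      intro j
      rw [FnFun, if_neg (hguard j), prod_pairs_eq]
    have hbbelow : ∀ j, BddBelow (Set.range fun k => dist (z j k) p) :=
      fun j => ⟨0, by rintro _ ⟨k, rfl⟩; exact dist_nonneg⟩
    have hnum_nonneg : ∀ j, (0:ℝ) ≤
        (⨅ k, dist (z j k) p) * ∏ q ∈ pairsS n, dist (z j q.1) (z j q.2) :=
      fun j => mul_nonneg (le_ciInf fun k => dist_nonneg)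
        (Finset.prod_nonneg fun q _ => dist_nonneg)
    have hFε : ∀ j, ε * R j ^ (n*(n-1)/2 + 1) ≤
        (⨅ k, dist (z j k) p) * ∏ q ∈ pairsS n, dist (z j q.1) (z j q.2) := by
      intro j
      have h1 : ε ≤ FnFun p n (z j) := by
        have h2 := hzF j
        have h3 : 0 ≤ FnFun p n (z j) := by
          rw [hFn_eq j]
          exact div_nonneg (hnum_nonneg j) (pow_nonneg (hR0 j).le _)
        rwa [abs_of_nonneg h3] at h2
      rw [hFn_eq j] at h1
      exact (le_div_iff₀ (pow_pos (hR0 j) _)).1 h1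
    have hub : ∀ j k, dist (z j k) p ≤ R j :=
      fun j k => le_ciSup (Set.finite_range fun k => dist (z j k) p).bddAbove k
    have hub2 : ∀ j k l, dist (z j k) (z j l) ≤ 2 * R j := by
      intro j k l
      calc dist (z j k) (z j l) ≤ dist (z j k) p + dist p (z j l) := dist_triangle _ _ _
        _ ≤ R j + R j := add_le_add (hub j k) (by rw [dist_comm]; exact hub j l)
        _ = 2 * R j := by ring
    set δ : ℝ := ε / 2 ^ (n*(n-1)/2) with hδ_def
    have hδ : 0 < δ := by positivity
    -- lower bound on distances to p
    have hmin : ∀ j k, δ * R j ≤ dist (z j k) p := by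
      intro j k
      have hprod_ub : (∏ q ∈ pairsS n, dist (z j q.1) (z j q.2)) ≤
          (2 * R j) ^ (n*(n-1)/2) := by
        rw [← card_pairsS (n := n), ← Finset.prod_const]
        exact Finset.prod_le_prod (fun q _ => dist_nonneg) (fun q _ => hub2 j q.1 q.2)
      have h1 : ε * R j ^ (n*(n-1)/2 + 1) ≤ dist (z j k) p * (2 * R j) ^ (n*(n-1)/2) :=
        (hFε j).trans (mul_le_mul (ciInf_le (hbbelow j) k) hprod_ub
          (Finset.prod_nonneg fun q _ => dist_nonneg) dist_nonneg)
      have h2 : ε * R j ≤ dist (z j k) p * 2 ^ (n*(n-1)/2) := by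
        have hRN : (0:ℝ) < R j ^ (n*(n-1)/2) := pow_pos (hR0 j) _
        rw [← mul_le_mul_iff_of_pos_right hRN]
        calc ε * R j * R j ^ (n*(n-1)/2) = ε * R j ^ (n*(n-1)/2 + 1) := by
              rw [pow_succ]; ring
          _ ≤ dist (z j k) p * (2 * R j) ^ (n*(n-1)/2) := h1
          _ = dist (z j k) p * 2 ^ (n*(n-1)/2) * R j ^ (n*(n-1)/2) := by
              rw [mul_pow]; ring
      rw [hδ_def, div_mul_eq_mul_div, div_le_iff₀ (by positivity : (0:ℝ) < 2 ^ (n*(n-1)/2))]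
      linarith
    -- lower bound on pairwise distances
    have hN1 : 1 ≤ n*(n-1)/2 := by
      have h2 : 2 * (2-1) / 2 ≤ n * (n-1) / 2 :=
        Nat.div_le_div_right (Nat.mul_le_mul hn (by omega))
      simpa using h2
    have hpair : ∀ j, ∀ q ∈ pairsS n, δ * R j ≤ dist (z j q.1) (z j q.2) := by
      intro j q hq
      obtain ⟨N', hNN⟩ : ∃ N', n*(n-1)/2 = N' + 1 := ⟨n*(n-1)/2 - 1, by omega⟩
      have herase : ∏ q' ∈ (pairsS n).erase q, dist (z j q'.1) (z j q'.2) ≤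
          (2 * R j) ^ N' := by
        have hcard : ((pairsS n).erase q).card = N' := by
          rw [Finset.card_erase_of_mem hq, card_pairsS]; omega
        rw [← hcard, ← Finset.prod_const]
        exact Finset.prod_le_prod (fun q' _ => dist_nonneg) (fun q' _ => hub2 j q'.1 q'.2)
      have hsplit : (∏ q' ∈ pairsS n, dist (z j q'.1) (z j q'.2)) =
          dist (z j q.1) (z j q.2) * ∏ q' ∈ (pairsS n).erase q, dist (z j q'.1) (z j q'.2) :=
        (Finset.mul_prod_erase _ _ hq).symm
      have h1 : ε * R j ^ (N' + 2) ≤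
          (R j * (dist (z j q.1) (z j q.2) * (2 * R j) ^ N')) := by
        have := hFε j
        rw [hNN] at this
        refine le_trans (show ε * R j ^ (N' + 2) ≤ _ from this) ?_
        rw [hsplit]
        exact mul_le_mul ((ciInf_le (hbbelow j) q.1).trans (hub j q.1))
          (mul_le_mul_of_nonneg_left herase dist_nonneg)
          (mul_nonneg dist_nonneg (Finset.prod_nonneg fun q' _ => dist_nonneg))
          (hR0 j).le
      have h2 : ε * R j ≤ dist (z j q.1) (z j q.2) * 2 ^ N' := by
        have hRN : (0:ℝ) < R j ^ (N' + 1) := pow_pos (hR0 j) _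
        rw [← mul_le_mul_iff_of_pos_right hRN]
        calc ε * R j * R j ^ (N' + 1) = ε * R j ^ (N' + 2) := by ring
          _ ≤ R j * (dist (z j q.1) (z j q.2) * (2 * R j) ^ N') := h1
          _ = dist (z j q.1) (z j q.2) * 2 ^ N' * R j ^ (N' + 1) := by
              rw [mul_pow]; ring
      have h3 : δ * R j ≤ ε / 2 ^ N' * R j := by
        refine mul_le_mul_of_nonneg_right ?_ (hR0 j).le
        rw [hδ_def]
        exact div_le_div_of_nonneg_left hε.le (by positivity)
          (pow_le_pow_right₀ one_le_two (by omega))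
      refine h3.trans ?_
      rw [div_mul_eq_mul_div, div_le_iff₀ (by positivity : (0:ℝ) < 2 ^ N')]
      linarith
    have hpair' : ∀ j k l, k ≠ l → δ * R j ≤ dist (z j k) (z j l) := by
      intro j k l hkl
      rcases lt_or_gt_of_ne hkl with h | h
      · exact hpair j (k, l) (Finset.mem_filter.2 ⟨Finset.mem_univ _, h⟩)
      · rw [dist_comm]
        exact hpair j (l, k) (Finset.mem_filter.2 ⟨Finset.mem_univ _, h⟩)
    -- Bolzano–Weierstrass
    have hgbound : ∀ (q : Fin n × Fin n) (j : ℕ),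
        |(if q.1 = q.2 then dist (z j q.1) p else dist (z j q.1) (z j q.2)) / R j| ≤ 2 := by
      intro q j
      rw [abs_of_nonneg (div_nonneg (by split <;> exact dist_nonneg) (hR0 j).le),
        div_le_iff₀ (hR0 j)]
      split
      · calc dist (z j q.1) p ≤ R j := hub j q.1
          _ ≤ 2 * R j := by linarith [(hR0 j).le]
      · exact hub2 j q.1 q.2
    obtain ⟨φ, hφ, aa, haa⟩ := exists_subseq_forall_tendsto
      (fun (q : Fin n × Fin n) j =>
        (if q.1 = q.2 then dist (z j q.1) p else dist (z j q.1) (z j q.2)) / R j) 2 hgbound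
    set r' : ℕ → ℝ := fun j => R (φ j) with hr'_def
    have hr'0 : ∀ j, 0 < r' j := fun j => hR0 (φ j)
    have hφj : ∀ j : ℕ, (j:ℝ) ≤ (φ j : ℝ) := fun j => Nat.cast_le.2 (hφ.le_apply)
    have hscal : ScalingSeq r' := by
      refine ⟨hr'0, tendsto_atTop_mono (fun j => ?_) tendsto_natCast_atTop_atTop⟩
      calc (j:ℝ) ≤ (φ j : ℝ) := hφj j
        _ ≤ (φ j : ℝ) + 1 := by linarith
        _ ≤ R (φ j) := hRj (φ j)
    set Y : Fin n → ℕ → X := fun k j => z (φ j) k with hY_def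
    set W : ℕ → X := fun j => w (φ j) with hW_def
    -- limits for distances to p
    have hα : ∀ k : Fin n, Filter.Tendsto (fun j => dist (Y k j) p / r' j)
        Filter.atTop (nhds (aa (k, k))) := by
      intro k
      have := haa (k, k)
      simpa using this
    have hαδ : ∀ k, δ ≤ aa (k, k) := by
      intro k
      refine ge_of_tendsto' (hα k) (fun j => ?_)
      rw [le_div_iff₀ (hr'0 j)]
      exact hmin (φ j) k
    have hγ : ∀ k l : Fin n, k ≠ l → Filter.Tendsto (fun j => dist (Y k j) (Y l j) / r' j)
        Filter.atTop (nhds (aa (k, l))) := by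
      intro k l hkl
      have := haa (k, l)
      simpa [if_neg hkl] using this
    have hγδ : ∀ k l, (h : k ≠ l) → δ ≤ aa (k, l) := by
      intro k l hkl
      refine ge_of_tendsto' (hγ k l hkl) (fun j => ?_)
      rw [le_div_iff₀ (hr'0 j)]
      exact hpair' (φ j) k l hkl
    -- the slow sequence W
    have hW1 : Filter.Tendsto (fun j => dist (W j) p) Filter.atTop Filter.atTop := by
      refine tendsto_atTop_mono (fun j => ?_) tendsto_natCast_atTop_atTop
      exact (hφj j).trans (hw (φ j)).le
    have hW2 : Filter.Tendsto (fun j => dist (W j) p / r' j) Filter.atTop (nhds 0) := by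
      refine squeeze_zero (fun j : ℕ => div_nonneg dist_nonneg (hr'0 j).le)
        (g := fun j : ℕ => 1 / ((j:ℝ) + 1)) (fun j => ?_) tendsto_one_div_add_atTop_nhds_zero_nat
      have hb : dist (W j) p / r' j ≤ 1 / ((φ j : ℝ) + 1) := by
        rw [div_le_div_iff₀ (hr'0 j) (by positivity)]
        calc dist (W j) p * ((φ j : ℝ) + 1) = ((φ j : ℝ) + 1) * dist (w (φ j)) p := by
              rw [hW_def]; ring
          _ ≤ R (φ j) := hRw (φ j)
          _ = 1 * r' j := by rw [hr'_def]; ring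
      refine hb.trans ?_
      exact div_le_div_of_nonneg_left one_pos.le (by positivity) (by linarith [hφj j])
    have hWS : W ∈ SeqInf r' p := ⟨hW1, 0, hW2⟩
    have hYS : ∀ k, Y k ∈ SeqInf r' p := by
      intro k
      refine ⟨?_, aa (k, k), hα k⟩
      have h8 : Filter.Tendsto (fun j : ℕ => δ * ((j:ℝ) + 1)) Filter.atTop Filter.atTop :=
        (Filter.tendsto_atTop_add_const_right _ 1 tendsto_natCast_atTop_atTop).const_mul_atTop hδ
      refine tendsto_atTop_mono (fun j => ?_) h8
      calc δ * ((j:ℝ) + 1) ≤ δ * R (φ j) :=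
            mul_le_mul_of_nonneg_left ((by linarith [hφj j] : (j:ℝ)+1 ≤ (φ j:ℝ)+1).trans
              (hRj (φ j))) hδ.le
        _ ≤ dist (Y k j) p := hmin (φ j) k
    -- limits between W and Y k
    have hWY : ∀ k, Filter.Tendsto (fun j => dist (W j) (Y k j) / r' j)
        Filter.atTop (nhds (aa (k, k))) := by
      intro k
      refine tendsto_of_abs_sub_le (g := fun j => dist (Y k j) p / r' j)
        (e := fun j => dist (W j) p / r' j) (fun j => ?_) hW2 (hα k)
      show |dist (W j) (Y k j) / r' j - dist (Y k j) p / r' j| ≤ dist (W j) p / r' j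
      rw [div_sub_div_same, abs_div, abs_of_pos (hr'0 j)]
      gcongr
      · exact (hr'0 j).le
      · have := abs_dist_sub_le (W j) p (Y k j)
        rwa [dist_comm p (Y k j)] at this
    -- build the clique
    set x' : Fin (n+1) → ℕ → X := Fin.cases W Y with hx'_def
    have hx'S : ∀ i, x' i ∈ SeqInf r' p := by
      intro i
      induction i using Fin.cases with
      | zero => simpa [hx'_def] using hWS
      | succ k => simpa [hx'_def] using hYS k
    have hstab : ∀ i j : Fin (n+1), i ≠ j →
        ∃ L, Filter.Tendsto (fun m => dist (x' i m) (x' j m) / r' m) Filter.atTop (nhds L)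
          ∧ δ ≤ L := by
      intro i j hij
      rcases Fin.eq_zero_or_eq_succ i with rfl | ⟨k, rfl⟩ <;>
        rcases Fin.eq_zero_or_eq_succ j with rfl | ⟨l, rfl⟩
      · exact absurd rfl hij
      · refine ⟨aa (l, l), ?_, hαδ l⟩
        simpa [hx'_def] using hWY l
      · refine ⟨aa (k, k), ?_, hαδ k⟩
        have := hWY k
        simp only [hx'_def, Fin.cases_zero, Fin.cases_succ]
        simpa [dist_comm] using this
      · have hkl : k ≠ l := fun h => hij (by rw [h])
        refine ⟨aa (k, l), ?_, hγδ k l hkl⟩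
        simpa [hx'_def] using hγ k l hkl
    set v : Fin (n+1) → Set (ℕ → X) := fun i => classOf r' p (x' i) with hv_def
    have hv_inj : Function.Injective v := by
      intro i j hij
      by_contra hne
      obtain ⟨L, hT, hδL⟩ := hstab i j hne
      have heq : EquivSeq r' (x' i) (x' j) := equivSeq_of_classOf_eq (hx'S j) hij
      have : L = 0 := tendsto_nhds_unique hT heq
      linarith
    set CC : Set (Set (ℕ → X)) := Set.range v with hCC_def
    have hclique : IsCliqueCl r' p CC := by
      constructor
      · rintro _ ⟨i, rfl⟩
        exact ⟨x' i, hx'S i, rfl⟩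
      · rintro u hu v' hv' huv
        obtain ⟨i, rfl⟩ := hu
        obtain ⟨j, rfl⟩ := hv'
        have hij : i ≠ j := fun h => huv (by rw [h])
        refine ⟨⟨x' i, hx'S i, rfl⟩, ⟨x' j, hx'S j, rfl⟩, huv, ?_⟩
        intro xu hxu yv hyv
        obtain ⟨L, hT, -⟩ := hstab i j hij
        exact ⟨L, tendsto_dist_div_congr hr'0 hxu.2 hyv.2 hT⟩
    have hle := H r' hscal CC hclique
    have hinj2 : Function.Injective
        (fun i : ULift (Fin (n+1)) => (⟨v i.down, i.down, rfl⟩ : ↥CC)) := by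
      intro i j hij
      exact congrArg ULift.up (hv_inj (congrArg Subtype.val hij))
    have hge : ((n+1 : ℕ) : Cardinal) ≤ Cardinal.mk ↥CC := by
      have := Cardinal.mk_le_of_injective hinj2
      simpa [Cardinal.mk_uLift, Cardinal.mk_fin] using this
    have : ((n+1 : ℕ) : Cardinal) ≤ (n : Cardinal) := hge.trans hle
    rw [show ((n : ℕ) : Cardinal) = ((n : ℕ) : Cardinal) from rfl] at this
    have : (n+1 : ℕ) ≤ n := by exact_mod_cast this
    omega
  · -- CondF → every clique has at most n vertices
    intro hF r hr C hC
    by_contra hcard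
    push_neg at hcard
    -- extract n+1 distinct vertices
    obtain ⟨e⟩ : Nonempty (ULift (Fin (n+1)) ↪ ↥C) := by
      rw [← Cardinal.le_def]
      have h1 : ((n+1 : ℕ) : Cardinal) ≤ Cardinal.mk ↥C := by
        push_cast
        exact (Cardinal.add_one_le_succ _).trans (Order.succ_le_of_lt hcard)
      simpa [Cardinal.mk_uLift, Cardinal.mk_fin] using h1
    set v : Fin (n+1) → Set (ℕ → X) := fun i => (e ⟨i⟩ : Set (ℕ → X)) with hv_def
    have hv_inj : Function.Injective v := by
      intro i j hij
      have : e ⟨i⟩ = e ⟨j⟩ := Subtype.ext hij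
      exact congrArg ULift.down (e.injective this)
    have hvC : ∀ i, v i ∈ C := fun i => (e ⟨i⟩).2
    have hvV : ∀ i, v i ∈ VertexSet r p := fun i => hC.1 (hvC i)
    choose x hxS hxv using hvV
    have hxmem : ∀ i, x i ∈ v i := fun i => (hxv i) ▸ mem_classOf_self (hxS i)
    have hAdj : ∀ i j, i ≠ j → MutuallyStable r (x i) (x j) := by
      intro i j hij
      have hne : v i ≠ v j := fun h => hij (hv_inj h)
      exact (hC.2 _ (hvC i) _ (hvC j) hne).2.2.2 _ (hxmem i) _ (hxmem j)
    choose a ha using fun i => (hxS i).2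
    have ha_nonneg : ∀ i, 0 ≤ a i :=
      fun i => ge_of_tendsto' (ha i) (fun m => div_nonneg dist_nonneg (hr.1 m).le)
    -- the pairwise limits
    set c : Fin (n+1) → Fin (n+1) → ℝ :=
      fun i j => if h : i ≠ j then (hAdj i j h).choose else 0 with hc_def
    have hc : ∀ i j (h : i ≠ j),
        Filter.Tendsto (fun m => dist (x i m) (x j m) / r m) Filter.atTop (nhds (c i j)) := by
      intro i j h
      simp only [hc_def, dif_pos h]
      exact (hAdj i j h).choose_spec
    have hc_pos : ∀ i j, i ≠ j → 0 < c i j := by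
      intro i j h
      rcases (ge_of_tendsto' (hc i j h)
        (fun m => div_nonneg dist_nonneg (hr.1 m).le)).lt_or_eq with h'|h'
      · exact h'
      · exfalso
        have heq : EquivSeq r (x i) (x j) := by
          rw [EquivSeq, h']
          exact hc i j h
        exact h (hv_inj (by rw [hxv i, hxv j, classOf_eq_of_equivSeq hr.1 heq]))
    -- at most one vertex has zero label
    have hj0 : ∃ j₀ : Fin (n+1), ∀ i, i ≠ j₀ → 0 < a i := by
      by_cases hall : ∀ i, 0 < a i
      · exact ⟨0, fun i _ => hall i⟩
      · push_neg at hall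
        obtain ⟨i₀, hi₀⟩ := hall
        refine ⟨i₀, fun i hi => ?_⟩
        rcases (ha_nonneg i).lt_or_eq with h|h
        · exact h
        · exfalso
          have hai : a i = 0 := h.symm
          have hai₀ : a i₀ = 0 := le_antisymm hi₀ (ha_nonneg i₀)
          have heq : EquivSeq r (x i) (x i₀) := by
            refine squeeze_zero (fun m => div_nonneg dist_nonneg (hr.1 m).le)
              (g := fun m => dist (x i m) p / r m + dist (x i₀ m) p / r m) (fun m => ?_) ?_
            · show dist (x i m) (x i₀ m) / r m ≤ dist (x i m) p / r m + dist (x i₀ m) p / r m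
              rw [← add_div]
              gcongr
              · exact (hr.1 m).le
              · rw [dist_comm (x i₀ m) p]
                exact dist_triangle _ _ _
            · have := (ha i).add (ha i₀)
              rw [hai, hai₀, add_zero] at this
              exact this
          exact hi (hv_inj (by rw [hxv i, hxv i₀, classOf_eq_of_equivSeq hr.1 heq]))
    obtain ⟨j₀, hj₀⟩ := hj0
    set σ : Fin n → Fin (n+1) := j₀.succAbove with hσ_def
    have hσj : ∀ k, σ k ≠ j₀ := fun k => Fin.succAbove_ne j₀ k
    have hσinj : Function.Injective σ := Fin.succAbove_right_injective
    -- the constants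
    set A : ℝ := (Finset.univ.inf' Finset.univ_nonempty (fun k : Fin n => a (σ k))) / 2 with hA_def
    have hA : 0 < A := by
      have : ∀ k : Fin n, (0:ℝ) < a (σ k) := fun k => hj₀ _ (hσj k)
      have h2 : (0:ℝ) < Finset.univ.inf' Finset.univ_nonempty (fun k : Fin n => a (σ k)) :=
        (Finset.lt_inf'_iff _).2 (fun k _ => this k)
      positivity
    set B : ℝ := (Finset.univ.sup' Finset.univ_nonempty (fun k : Fin n => a (σ k))) + 1
      with hB_def
    have hB : 0 < B := by
      have := Finset.le_sup' (fun k : Fin n => a (σ k)) (Finset.mem_univ ⟨0, hn0⟩)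
      have := ha_nonneg (σ ⟨0, hn0⟩)
      simp only [hB_def]
      linarith
    set G : ℝ := ((pairsS n).inf' (pairsS_nonempty hn)
      (fun q => c (σ q.1) (σ q.2))) / 2 with hG_def
    have hσq : ∀ q ∈ pairsS n, σ q.1 ≠ σ q.2 := by
      intro q hq
      have : q.1 < q.2 := (Finset.mem_filter.1 hq).2
      exact fun h => absurd (hσinj h) (ne_of_lt this)
    have hG : 0 < G := by
      have h2 : (0:ℝ) < (pairsS n).inf' (pairsS_nonempty hn) (fun q => c (σ q.1) (σ q.2)) :=
        (Finset.lt_inf'_iff _).2 (fun q hq => hc_pos _ _ (hσq q hq))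
      positivity
    set ε₀ : ℝ := A * G ^ (n * (n-1) / 2) / B ^ (n * (n-1) / 2 + 1) with hε₀_def
    have hε₀ : 0 < ε₀ := by positivity
    obtain ⟨M, hM⟩ := hF ε₀ hε₀
    -- eventual bounds
    have hEv : ∀ᶠ m in Filter.atTop,
        (∀ k : Fin n, a (σ k) / 2 ≤ dist (x (σ k) m) p / r m
          ∧ dist (x (σ k) m) p / r m ≤ a (σ k) + 1)
        ∧ (∀ q ∈ pairsS n, c (σ q.1) (σ q.2) / 2 ≤ dist (x (σ q.1) m) (x (σ q.2) m) / r m)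
        ∧ max M 1 ≤ dist (x (σ ⟨0, hn0⟩) m) p := by
      refine Filter.Eventually.and (Filter.eventually_all.2 (fun k => ?_))
        (Filter.Eventually.and ((pairsS n).eventually_all.2 (fun q hq => ?_)) ?_)
      · refine Filter.Eventually.and
          ((ha (σ k)).eventually (eventually_ge_nhds ?_))
          ((ha (σ k)).eventually (eventually_le_nhds ?_))
        · linarith [hj₀ _ (hσj k)]
        · linarith [hj₀ _ (hσj k)]
      · exact (hc _ _ (hσq q hq)).eventually (eventually_ge_nhds
          (by linarith [hc_pos _ _ (hσq q hq)]))
      · exact (hxS (σ ⟨0, hn0⟩)).1.eventually_ge_atTop _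
    obtain ⟨m, h1, h2, h3⟩ := hEv.exists
    have hrm : 0 < r m := hr.1 m
    set xx : Fin n → X := fun k => x (σ k) m with hxx_def
    have f1 : ∀ k, a (σ k) / 2 * r m ≤ dist (xx k) p :=
      fun k => (le_div_iff₀ hrm).1 (h1 k).1
    have f2 : ∀ k, dist (xx k) p ≤ (a (σ k) + 1) * r m :=
      fun k => (div_le_iff₀ hrm).1 (h1 k).2
    have f3 : ∀ q ∈ pairsS n, c (σ q.1) (σ q.2) / 2 * r m ≤ dist (xx q.1) (xx q.2) :=
      fun q hq => (le_div_iff₀ hrm).1 (h2 q hq)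
    have hsup_le : (⨆ k, dist (xx k) p) ≤ B * r m := by
      refine ciSup_le (fun k => (f2 k).trans ?_)
      have : a (σ k) ≤ Finset.univ.sup' Finset.univ_nonempty (fun k : Fin n => a (σ k)) :=
        Finset.le_sup' (fun k : Fin n => a (σ k)) (Finset.mem_univ k)
      have hBk : a (σ k) + 1 ≤ B := by simp only [hB_def]; linarith
      exact mul_le_mul_of_nonneg_right hBk hrm.le
    have hsup1 : (1:ℝ) ≤ ⨆ k, dist (xx k) p :=
      le_trans (le_max_right M 1) (h3.trans (le_ciSup (Set.finite_range fun k : Fin n => dist (xx k) p).bddAbove (⟨0, hn0⟩ : Fin n)))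
    have hsupM : M ≤ ⨆ k, dist (xx k) p :=
      le_trans (le_max_left M 1) (h3.trans (le_ciSup (Set.finite_range fun k : Fin n => dist (xx k) p).bddAbove (⟨0, hn0⟩ : Fin n)))
    have hguard : ¬ (∀ k, xx k = p) := by
      intro h
      have := h3
      rw [show x (σ ⟨0, hn0⟩) m = xx ⟨0, hn0⟩ from rfl, h ⟨0, hn0⟩, dist_self] at this
      linarith [le_max_right M 1]
    have hinf : A * r m ≤ ⨅ k, dist (xx k) p := by
      refine le_ciInf (fun k => le_trans ?_ (f1 k))
      have : Finset.univ.inf' Finset.univ_nonempty (fun k : Fin n => a (σ k)) ≤ a (σ k) :=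
        Finset.inf'_le _ (Finset.mem_univ k)
      have hAk : A ≤ a (σ k) / 2 := by simp only [hA_def]; linarith
      exact mul_le_mul_of_nonneg_right hAk hrm.le
    have hprod : (G * r m) ^ (n * (n-1) / 2) ≤
        ∏ q ∈ pairsS n, dist (xx q.1) (xx q.2) := by
      rw [← card_pairsS (n := n), ← Finset.prod_const]
      refine Finset.prod_le_prod (fun q _ => by positivity) (fun q hq => ?_)
      refine le_trans ?_ (f3 q hq)
      have : G ≤ c (σ q.1) (σ q.2) / 2 := by
        have := Finset.inf'_le (fun q : Fin n × Fin n => c (σ q.1) (σ q.2)) hq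
        simp only [hG_def]; linarith
      exact mul_le_mul_of_nonneg_right this hrm.le
    have hFn : FnFun p n xx =
        ((⨅ k, dist (xx k) p) * ∏ q ∈ pairsS n, dist (xx q.1) (xx q.2)) /
          (⨆ k, dist (xx k) p) ^ (n * (n-1) / 2 + 1) := by
      rw [FnFun, if_neg hguard, prod_pairs_eq]
    have hsup_pos : (0:ℝ) < ⨆ k, dist (xx k) p := lt_of_lt_of_le one_pos hsup1
    have hεle : ε₀ ≤ FnFun p n xx := by
      rw [hFn]
      have step1 : ε₀ = (A * r m * (G * r m) ^ (n * (n-1) / 2)) /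
          (B * r m) ^ (n * (n-1) / 2 + 1) := by
        rw [hε₀_def, mul_pow, mul_pow]
        rw [pow_succ (r m)]
        field_simp
      rw [step1]
      have hnum : (0:ℝ) ≤ A * r m * (G * r m) ^ (n * (n-1) / 2) := by positivity
      have hnum2 : A * r m * (G * r m) ^ (n * (n-1) / 2) ≤
          (⨅ k, dist (xx k) p) * ∏ q ∈ pairsS n, dist (xx q.1) (xx q.2) :=
        mul_le_mul hinf hprod (by positivity) ((by positivity : (0:ℝ) ≤ A * r m).trans hinf)
      calc (A * r m * (G * r m) ^ (n * (n-1) / 2)) / (B * r m) ^ (n * (n-1) / 2 + 1)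
          ≤ ((⨅ k, dist (xx k) p) * ∏ q ∈ pairsS n, dist (xx q.1) (xx q.2)) /
            (B * r m) ^ (n * (n-1) / 2 + 1) :=
          (div_le_div_iff_of_pos_right (by positivity)).2 hnum2
        _ ≤ ((⨅ k, dist (xx k) p) * ∏ q ∈ pairsS n, dist (xx q.1) (xx q.2)) /
            (⨆ k, dist (xx k) p) ^ (n * (n-1) / 2 + 1) :=
          div_le_div_of_nonneg_left (hnum.trans hnum2) (by positivity)
            (pow_le_pow_left₀ hsup_pos.le hsup_le _)
    have := hM xx hsupM
    have habs : ε₀ ≤ |FnFun p n xx| := hεle.trans (le_abs_self _)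
    linarith
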